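/- Let 0 ≤ p ≤ n. There exists an operator field H : ℝⁿ → End(Λᵖℝⁿ) whose matrix entries x ↦ ⟨H(x)α, β⟩ are homogeneous harmonic quadratic polynomials for all constant α, β ∈ Λᵖℝⁿ, such that for all x ≠ 0: Π_x = ((n-p)/n) I + |x|^{-2} H(x) and Φ_x = (p/n) I − |x|^{-2} H(x), as operators on Λᵖℝⁿ. -/

import Mathlib

noncomputable section
open scoped RealInnerProductSpace BigOperators FourierTransform
open MeasureTheory

namespace Xray

/-- Euclidean space `ℝⁿ`. -/
abbrev V (n : ℕ) := EuclideanSpace ℝ (Fin n)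

/-- Concrete model for the full exterior algebra `Λ*ℝⁿ`, with the inner product that
makes the standard basis multivectors `e_s` (indexed by subsets `s` of `{1,…,n}`)
orthonormal. -/
abbrev Ext (n : ℕ) := EuclideanSpace ℝ (Finset (Fin n))

variable {n : ℕ}

/-- Sign produced when moving `e_i` past the basis multivector `e_s`. -/
def esign (s : Finset (Fin n)) (i : Fin n) : ℝ :=
  (-1 : ℝ) ^ (s.filter (fun j => j < i)).card

/-- Left exterior multiplication `α ↦ x ∧ α` in the concrete model. -/
def wedgeVec (x : V n) : Ext n →ₗ[ℝ] Ext n where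
  toFun α := (EuclideanSpace.equiv (Finset (Fin n)) ℝ).symm
    (fun s => ∑ i ∈ s, (esign (s.erase i) i * x i) * α (s.erase i))
  map_add' α β := by
    ext s
    simp [mul_add, Finset.sum_add_distrib]
  map_smul' c α := by
    ext s
    simp [Finset.mul_sum]
    ring_nf
    simp [mul_comm, mul_left_comm]
    simp [mul_assoc]

/-- The interior product `α ⌟ x`, i.e. the adjoint of left exterior
multiplication by `x` with respect to the inner product. -/
def intProd (x : V n) : Ext n →ₗ[ℝ] Ext n := LinearMap.adjoint (wedgeVec x)

/-- The wedge product of a list of vectors, as an element of `Λ*ℝⁿ`. -/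
def wedgeList (l : List (V n)) : Ext n :=
  l.foldr (fun v a => wedgeVec v a) (EuclideanSpace.single ∅ 1)

/-- `Λ*P ⊆ Λ*ℝⁿ`: the subspace spanned by wedge products of vectors of the
subspace `P ⊆ ℝⁿ`. -/
def extSub (P : Submodule ℝ (V n)) : Submodule ℝ (Ext n) :=
  Submodule.span ℝ {α | ∃ l : List (V n), (∀ v ∈ l, v ∈ P) ∧ α = wedgeList l}

/-- The orthogonal projection of `Λ*ℝⁿ` onto a subspace, viewed as an
endomorphism of `Λ*ℝⁿ`. -/
def subProj (K : Submodule ℝ (Ext n)) : Ext n →ₗ[ℝ] Ext n :=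
  K.subtype ∘ₗ (K.orthogonalProjectionOnto).toLinearMap

/-- `α ↦ α|_P`, the orthogonal projection of a multivector onto `Λ*P`. -/
def projExt (P : Submodule ℝ (V n)) : Ext n →ₗ[ℝ] Ext n := subProj (extSub P)

/-- The hyperplane orthogonal to `x`. -/
def hyp (x : V n) : Submodule ℝ (V n) := (ℝ ∙ x)ᗮ

/-- `Π_x` : orthogonal projection of `Λ*ℝⁿ` onto `Λ*H_x`. -/
def PiOp (x : V n) : Ext n →ₗ[ℝ] Ext n := projExt (hyp x)

/-- `Φ_x` : orthogonal projection of `Λ*ℝⁿ` onto `x ∧ Λ*H_x`. -/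
def PhiOp (x : V n) : Ext n →ₗ[ℝ] Ext n :=
  subProj (Submodule.map (wedgeVec x) (extSub (hyp x)))

/-- The degree-`p` summand `Λᵖℝⁿ ⊆ Λ*ℝⁿ`. -/
def grade (n p : ℕ) : Submodule ℝ (Ext n) :=
  Submodule.span ℝ {α | ∃ s : Finset (Fin n), s.card = p ∧ α = EuclideanSpace.single s 1}

/-- The `m`-dimensional volume of the unit sphere `S^m ⊂ ℝ^{m+1}`. -/
def sphereVol (m : ℕ) : ℝ :=
  2 * Real.pi ^ ((m + 1 : ℝ) / 2) / Real.Gamma ((m + 1 : ℝ) / 2)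

end Xray

namespace Xray

variable {n : ℕ}

lemma wedge_apply (x : V n) (α : Ext n) (s : Finset (Fin n)) :
    wedgeVec x α s = ∑ i ∈ s, esign (s.erase i) i * x i * α (s.erase i) := rfl

lemma esign_erase (s : Finset (Fin n)) (i : Fin n) : esign (s.erase i) i = esign s i := by
  unfold esign
  congr 1
  rw [Finset.filter_erase, Finset.erase_eq_of_notMem]
  simp

lemma esign_insert (k : Fin n) (u : Finset (Fin n)) (j : Fin n) (hk : k ∉ u) :
    esign (insert k u) j = (if k < j then (-1:ℝ) else 1) * esign u j := by
  unfold esign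
  rw [Finset.filter_insert]
  by_cases h : k < j
  · rw [if_pos h, if_pos h, Finset.card_insert_of_notMem (by simp [hk]), pow_succ]
    ring
  · rw [if_neg h, if_neg h, one_mul]

lemma esign_sq (s : Finset (Fin n)) (i : Fin n) : esign s i * esign s i = 1 := by
  unfold esign
  rw [← pow_add]
  simp [pow_mul_comm, ← two_mul, pow_mul]

end Xray

namespace Xray

variable {n : ℕ}

lemma wedge_single (x : V n) (s : Finset (Fin n)) :
    wedgeVec x (EuclideanSpace.single s (1:ℝ)) =
      ∑ i ∈ sᶜ, (esign s i * x i) • EuclideanSpace.single (insert i s) (1:ℝ) := by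
  ext t
  rw [wedge_apply]
  have hR : (∑ i ∈ sᶜ, (esign s i * x i) • EuclideanSpace.single (insert i s) (1:ℝ)) t
      = ∑ i : Fin n, if i ∉ s then esign s i * x i * (if t = insert i s then 1 else 0) else 0 := by
    rw [WithLp.ofLp_sum, Finset.sum_apply, eq_comm]
    simp only [← Finset.mem_compl (s := s)]
    rw [Finset.sum_ite_mem, Finset.univ_inter]
    simp [EuclideanSpace.single_apply]
  have hL : (∑ i ∈ t, esign (t.erase i) i * x i * (EuclideanSpace.single s (1:ℝ)) (t.erase i))
      = ∑ i : Fin n, if i ∈ t then esign (t.erase i) i * x i * (if t.erase i = s then 1 else 0) else 0 := by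
    rw [eq_comm, Finset.sum_ite_mem, Finset.univ_inter]
    simp [EuclideanSpace.single_apply]
  rw [hL, hR]
  apply Finset.sum_congr rfl
  intro i _
  by_cases hit : i ∈ t
  · by_cases hts : t.erase i = s
    · have his : i ∉ s := hts ▸ Finset.notMem_erase i t
      have hins : t = insert i s := by rw [← hts, Finset.insert_erase hit]
      rw [if_pos hit, if_pos hts, if_pos his, if_pos hins, hts]
    · rw [if_pos hit, if_neg hts]
      by_cases his : i ∈ s
      · simp [his]
      · have : ¬ t = insert i s := fun h => hts (by rw [h, Finset.erase_insert his])
        simp [his, this]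
  · rw [if_neg hit]
    by_cases his : i ∈ s
    · simp [his]
    · have : ¬ t = insert i s := fun h => hit (h ▸ Finset.mem_insert_self i s)
      simp [his, this]

end Xray

namespace Xray

variable {n : ℕ}

lemma inner_single_left' (s : Finset (Fin n)) (α : Ext n) :
    ⟪EuclideanSpace.single s (1:ℝ), α⟫ = α s := by
  rw [EuclideanSpace.inner_single_left]; simp

lemma inner_single_right' (s : Finset (Fin n)) (α : Ext n) :
    ⟪α, EuclideanSpace.single s (1:ℝ)⟫ = α s := by
  rw [real_inner_comm, inner_single_left']

lemma int_inner (x : V n) (α β : Ext n) :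
    ⟪intProd x α, β⟫ = ⟪α, wedgeVec x β⟫ :=
  LinearMap.adjoint_inner_left _ _ _

lemma int_apply (x : V n) (α : Ext n) (s : Finset (Fin n)) :
    intProd x α s = ∑ i ∈ sᶜ, esign s i * x i * α (insert i s) := by
  rw [← inner_single_right' s (intProd x α), int_inner, wedge_single, inner_sum]
  apply Finset.sum_congr rfl
  intro i _
  rw [real_inner_smul_right, inner_single_right']

lemma wedge_add (x y : V n) : wedgeVec (x + y) = wedgeVec x + wedgeVec y := by
  apply LinearMap.ext; intro α; ext s
  simp only [LinearMap.add_apply, PiLp.add_apply, wedge_apply, ← Finset.sum_add_distrib]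
  apply Finset.sum_congr rfl
  intro i _
  ring

lemma wedge_smul (c : ℝ) (x : V n) : wedgeVec (c • x) = c • wedgeVec x := by
  apply LinearMap.ext; intro α; ext s
  simp only [LinearMap.smul_apply, PiLp.smul_apply, wedge_apply, smul_eq_mul, Finset.mul_sum]
  apply Finset.sum_congr rfl
  intro i _
  ring

lemma int_add (x y : V n) : intProd (x + y) = intProd x + intProd y := by
  unfold intProd; rw [wedge_add, map_add]

lemma int_smul (c : ℝ) (x : V n) : intProd (c • x) = c • intProd x := by
  apply LinearMap.ext; intro α; ext s
  simp only [LinearMap.smul_apply, PiLp.smul_apply, int_apply, smul_eq_mul, Finset.mul_sum]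
  apply Finset.sum_congr rfl
  intro i _
  ring

end Xray

namespace Xray

variable {n : ℕ}

lemma esign_cross (s : Finset (Fin n)) (i j : Fin n) (hi : i ∉ s) (hj : j ∈ s) (hij : i ≠ j) :
    esign s i * esign (insert i (s.erase j)) j = -(esign (s.erase j) j * esign (s.erase j) i) := by
  have h1 : esign s i = (if j < i then (-1:ℝ) else 1) * esign (s.erase j) i := by
    conv_lhs => rw [← Finset.insert_erase hj]
    exact esign_insert j _ i (Finset.notMem_erase j s)
  have h2 : esign (insert i (s.erase j)) j = (if i < j then (-1:ℝ) else 1) * esign (s.erase j) j :=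
    esign_insert i _ j (fun h => hi (Finset.mem_of_mem_erase h))
  rw [h1, h2]
  rcases lt_or_gt_of_ne hij with h | h
  · rw [if_neg (asymm h), if_pos h]; ring
  · rw [if_pos h, if_neg (asymm h)]; ring

lemma clifford (x y : V n) (α : Ext n) :
    intProd x (wedgeVec y α) + wedgeVec y (intProd x α) = (∑ i, x i * y i) • α := by
  ext s
  have hA : intProd x (wedgeVec y α) s
      = (∑ i ∈ sᶜ, x i * y i) * α s
        + ∑ i ∈ sᶜ, ∑ j ∈ s, esign s i * esign (insert i (s.erase j)) j *
            (x i * y j * α (insert i (s.erase j))) := by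
    rw [int_apply, Finset.sum_mul, ← Finset.sum_add_distrib]
    apply Finset.sum_congr rfl
    intro i hi
    have hi' : i ∉ s := Finset.mem_compl.mp hi
    rw [wedge_apply, Finset.sum_insert (by simpa using hi'), Finset.erase_insert hi',
      mul_add, Finset.mul_sum]
    congr 1
    · linear_combination (x i * y i * α s) * esign_sq s i
    · apply Finset.sum_congr rfl
      intro j hj
      rw [Finset.erase_insert_of_ne (fun h => hi' (by rw [h]; exact hj))]
      ring
  have hB : wedgeVec y (intProd x α) s
      = (∑ j ∈ s, x j * y j) * α s
        + ∑ j ∈ s, ∑ i ∈ sᶜ, esign (s.erase j) j * esign (s.erase j) i *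
            (x i * y j * α (insert i (s.erase j))) := by
    rw [wedge_apply, Finset.sum_mul, ← Finset.sum_add_distrib]
    apply Finset.sum_congr rfl
    intro j hj
    rw [int_apply, Finset.compl_erase, Finset.sum_insert (by simpa using hj),
      Finset.insert_erase hj, mul_add, Finset.mul_sum]
    congr 1
    · linear_combination (x j * y j * α s) * esign_sq (s.erase j) j
    · apply Finset.sum_congr rfl
      intro i hi
      ring
  have happ : (intProd x (wedgeVec y α) + wedgeVec y (intProd x α)) s
      = intProd x (wedgeVec y α) s + wedgeVec y (intProd x α) s := rfl
  rw [happ, hA, hB]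
  have hcross : ∑ i ∈ sᶜ, ∑ j ∈ s, esign s i * esign (insert i (s.erase j)) j *
        (x i * y j * α (insert i (s.erase j)))
      = - ∑ j ∈ s, ∑ i ∈ sᶜ, esign (s.erase j) j * esign (s.erase j) i *
            (x i * y j * α (insert i (s.erase j))) := by
    rw [Finset.sum_comm, ← Finset.sum_neg_distrib]
    apply Finset.sum_congr rfl
    intro j hj
    rw [← Finset.sum_neg_distrib]
    apply Finset.sum_congr rfl
    intro i hi
    have hi' : i ∉ s := Finset.mem_compl.mp hi
    rw [esign_cross s i j hi' hj (fun h => hi' (by rw [h]; exact hj))]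
    ring
  rw [hcross]
  have hsmul : ((∑ i, x i * y i) • α) s = (∑ i, x i * y i) * α s := rfl
  rw [hsmul, ← Finset.sum_add_sum_compl s (fun i => x i * y i)]
  ring

end Xray

namespace Xray

variable {n : ℕ}

lemma inner_V (x y : V n) : ⟪x, y⟫ = ∑ i, x i * y i := by
  rw [PiLp.inner_apply]
  simp [RCLike.inner_apply, mul_comm]

lemma clifford' (x y : V n) (α : Ext n) :
    intProd x (wedgeVec y α) + wedgeVec y (intProd x α) = ⟪x, y⟫ • α := by
  rw [inner_V, clifford]

lemma esign_swap (s : Finset (Fin n)) (i j : Fin n) (hi : i ∈ s) (hj : j ∈ s) (hij : i ≠ j) :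
    esign (s.erase i) i * esign ((s.erase i).erase j) j
      = -(esign (s.erase j) j * esign ((s.erase j).erase i) i) := by
  rw [esign_erase ((s.erase i)) j, esign_erase ((s.erase j)) i, esign_erase s i, esign_erase s j]
  have h1 : esign s j = (if i < j then (-1:ℝ) else 1) * esign (s.erase i) j := by
    conv_lhs => rw [← Finset.insert_erase hi]
    exact esign_insert i _ j (Finset.notMem_erase i s)
  have h2 : esign s i = (if j < i then (-1:ℝ) else 1) * esign (s.erase j) i := by
    conv_lhs => rw [← Finset.insert_erase hj]
    exact esign_insert j _ i (Finset.notMem_erase j s)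
  rw [h1, h2]
  rcases lt_or_gt_of_ne hij with h | h
  · rw [if_pos h, if_neg (asymm h)]; ring
  · rw [if_neg (asymm h), if_pos h]; ring

lemma wedge_anticomm (x y : V n) (α : Ext n) :
    wedgeVec x (wedgeVec y α) = - wedgeVec y (wedgeVec x α) := by
  ext s
  have key : ∀ a b : V n, wedgeVec a (wedgeVec b α) s
      = ∑ i ∈ s, ∑ j ∈ s, if j = i then 0 else
          esign (s.erase i) i * a i * (esign ((s.erase i).erase j) j * b j * α ((s.erase i).erase j)) := by
    intro a b
    rw [wedge_apply]
    apply Finset.sum_congr rfl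
    intro i hi
    rw [wedge_apply, Finset.mul_sum]
    rw [← Finset.sum_erase (s := s) (a := i) (f := fun j => if j = i then 0 else
          esign (s.erase i) i * a i * (esign ((s.erase i).erase j) j * b j * α ((s.erase i).erase j)))
        (by simp)]
    apply Finset.sum_congr rfl
    intro j hj
    rw [if_neg (Finset.ne_of_mem_erase hj)]
  rw [key x y,
    show (-(wedgeVec y) ((wedgeVec x) α)) s = -((wedgeVec y) ((wedgeVec x) α) s) from rfl,
    key y x, ← Finset.sum_neg_distrib, Finset.sum_comm]
  apply Finset.sum_congr rfl
  intro j hj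
  rw [← Finset.sum_neg_distrib]
  apply Finset.sum_congr rfl
  intro i hi
  by_cases hij : i = j
  · simp [hij]
  · rw [if_neg hij, if_neg (Ne.symm hij), Finset.erase_right_comm (a := j) (b := i)]
    have hs := esign_swap s i j hi hj (fun h => hij h)
    rw [show ((s.erase j).erase i) = ((s.erase i).erase j) from Finset.erase_right_comm] at hs
    linear_combination (x i * y j * α ((s.erase i).erase j)) * hs

end Xray

namespace Xray

variable {n : ℕ}

lemma wedge_wedge_self (x : V n) (α : Ext n) : wedgeVec x (wedgeVec x α) = 0 := by
  have h := wedge_anticomm x x α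
  have h2 : (2:ℝ) • wedgeVec x (wedgeVec x α) = 0 := by
    rw [two_smul]
    nth_rewrite 2 [h]
    simp
  simpa using smul_eq_zero.mp h2

lemma int_int_self (x : V n) (α : Ext n) : intProd x (intProd x α) = 0 := by
  apply ext_inner_right ℝ
  intro β
  rw [int_inner, int_inner, wedge_wedge_self, inner_zero_left, inner_zero_right]

lemma wedgeList_cons (v : V n) (l : List (V n)) :
    wedgeList (v :: l) = wedgeVec v (wedgeList l) := rfl

lemma empty_mem_extSub (P : Submodule ℝ (V n)) :
    EuclideanSpace.single (∅ : Finset (Fin n)) (1:ℝ) ∈ extSub P :=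
  Submodule.subset_span ⟨[], by simp, rfl⟩

lemma wedge_mem_extSub {P : Submodule ℝ (V n)} {v : V n} (hv : v ∈ P) {α : Ext n}
    (hα : α ∈ extSub P) : wedgeVec v α ∈ extSub P := by
  induction hα using Submodule.span_induction with
  | mem β hβ =>
    obtain ⟨l, hl, rfl⟩ := hβ
    exact Submodule.subset_span ⟨v :: l, by
      intro w hw
      rcases List.mem_cons.mp hw with h | h
      · exact h ▸ hv
      · exact hl w h, rfl⟩
  | zero => rw [map_zero]; exact Submodule.zero_mem _
  | add β γ _ _ hβ hγ => rw [map_add]; exact Submodule.add_mem _ hβ hγ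
  | smul c β _ hβ => rw [LinearMap.map_smul]; exact Submodule.smul_mem _ c hβ

lemma int_single_empty (x : V n) : intProd x (EuclideanSpace.single (∅ : Finset (Fin n)) (1:ℝ)) = 0 := by
  ext s
  rw [int_apply]
  have : ∀ i ∈ sᶜ, esign s i * x i * (EuclideanSpace.single (∅ : Finset (Fin n)) (1:ℝ)) (insert i s) = 0 := by
    intro i _
    rw [EuclideanSpace.single_apply, if_neg (by simp), mul_zero]
  rw [Finset.sum_congr rfl this]
  simp

lemma inner_hyp {x v : V n} (hv : v ∈ hyp x) : ⟪x, v⟫ = 0 := by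
  exact hv x (Submodule.mem_span_singleton_self x)

lemma int_extSub_hyp {x : V n} {α : Ext n} (hα : α ∈ extSub (hyp x)) : intProd x α = 0 := by
  induction hα using Submodule.span_induction with
  | mem β hβ =>
    obtain ⟨l, hl, rfl⟩ := hβ
    induction l with
    | nil => exact int_single_empty x
    | cons v l ih =>
      have hv : v ∈ hyp x := hl v List.mem_cons_self
      have hl' : ∀ w ∈ l, w ∈ hyp x := fun w hw => hl w (List.mem_cons_of_mem v hw)
      have hC := clifford' x v (wedgeList l)
      rw [wedgeList_cons, inner_hyp hv, zero_smul] at *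
      rw [ih hl', map_zero, add_zero] at hC
      exact hC
  | zero => rw [map_zero]
  | add β γ _ _ hβ hγ => rw [map_add, hβ, hγ, add_zero]
  | smul c β _ hβ => rw [LinearMap.map_smul, hβ, smul_zero]

end Xray

namespace Xray

variable {n : ℕ}

lemma wedge_single_basis {i : Fin n} {t : Finset (Fin n)} (hit : i ∉ t) :
    wedgeVec (EuclideanSpace.single i (1:ℝ)) (EuclideanSpace.single t (1:ℝ))
      = esign t i • EuclideanSpace.single (insert i t) (1:ℝ) := by
  rw [wedge_single]
  rw [Finset.sum_eq_single i]
  · rw [EuclideanSpace.single_apply, if_pos rfl, mul_one]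
  · intro k _ hk
    rw [EuclideanSpace.single_apply, if_neg hk, mul_zero, zero_smul]
  · intro h
    exact absurd (Finset.mem_compl.mpr hit) h

lemma single_decomp (γ : Ext n) :
    γ = ∑ s : Finset (Fin n), γ s • EuclideanSpace.single s (1:ℝ) := by
  ext t
  rw [WithLp.ofLp_sum, Finset.sum_apply]
  rw [Finset.sum_eq_single t]
  · simp [EuclideanSpace.single_apply]
  · intro s _ hs
    simp [EuclideanSpace.single_apply, Ne.symm hs]
  · simp

lemma mem_sup_decomp (x : V n) (hx : x ≠ 0) (γ : Ext n) :
    γ ∈ extSub (hyp x) ⊔ (extSub (hyp x)).map (wedgeVec x) := by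
  set S := extSub (hyp x) ⊔ (extSub (hyp x)).map (wedgeVec x) with hS
  have hxE : ∀ a ∈ extSub (hyp x), wedgeVec x a ∈ S :=
    fun a ha => Submodule.mem_sup_right (Submodule.mem_map_of_mem ha)
  have hE : ∀ a ∈ extSub (hyp x), a ∈ S := fun a ha => Submodule.mem_sup_left ha
  have hwedge : ∀ (v : V n), ∀ γ ∈ S, wedgeVec v γ ∈ S := by
    intro v γ hγ
    obtain ⟨a, ha, b, hb, rfl⟩ := Submodule.mem_sup.mp hγ
    obtain ⟨β, hβ, rfl⟩ := Submodule.mem_map.mp hb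
    have hn : ‖x‖ ≠ 0 := norm_ne_zero_iff.mpr hx
    have hh : v - (⟪x, v⟫ / ‖x‖ ^ 2) • x ∈ hyp x := by
      rw [hyp, Submodule.mem_orthogonal_singleton_iff_inner_right, inner_sub_right,
        real_inner_smul_right, real_inner_self_eq_norm_sq,
        div_mul_cancel₀ _ (pow_ne_zero 2 hn), sub_self]
    have hw : wedgeVec v = wedgeVec (v - (⟪x, v⟫ / ‖x‖ ^ 2) • x)
        + (⟪x, v⟫ / ‖x‖ ^ 2) • wedgeVec x := by
      rw [← wedge_smul, ← wedge_add]
      congr 1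
      abel
    rw [map_add (wedgeVec v), hw]
    simp only [LinearMap.add_apply, LinearMap.smul_apply]
    apply Submodule.add_mem
    · apply Submodule.add_mem
      · exact hE _ (wedge_mem_extSub hh ha)
      · exact Submodule.smul_mem _ _ (hxE a ha)
    · apply Submodule.add_mem
      · rw [wedge_anticomm]
        exact Submodule.neg_mem _ (hxE _ (wedge_mem_extSub hh hβ))
      · rw [wedge_wedge_self, smul_zero]
        exact Submodule.zero_mem _
  have hsingle : ∀ s : Finset (Fin n), EuclideanSpace.single s (1:ℝ) ∈ S := by
    intro s
    induction s using Finset.strongInduction with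
    | _ s ih =>
      rcases Finset.eq_empty_or_nonempty s with rfl | hs
      · exact hE _ (empty_mem_extSub _)
      · set i := s.min' hs with hi
        have him : i ∈ s := s.min'_mem hs
        have key : wedgeVec (EuclideanSpace.single i (1:ℝ))
            (EuclideanSpace.single (s.erase i) (1:ℝ))
            = EuclideanSpace.single s (1:ℝ) := by
          rw [wedge_single_basis (Finset.notMem_erase i s), Finset.insert_erase him]
          have : esign (s.erase i) i = 1 := by
            unfold esign
            rw [Finset.filter_eq_empty_iff.mpr ?_]
            · simp
            · intro j hj
              have hj1 := Finset.mem_of_mem_erase hj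
              have hj2 := Finset.ne_of_mem_erase hj
              exact not_lt.mpr (s.min'_le j hj1)
          rw [this, one_smul]
        rw [← key]
        exact hwedge _ _ (ih (s.erase i) (Finset.erase_ssubset him))
  rw [single_decomp γ]
  exact Submodule.sum_mem _ fun s _ => Submodule.smul_mem _ _ (hsingle s)

end Xray

namespace Xray

variable {n : ℕ}

lemma int_wedge_self_extSub {x : V n} {β : Ext n} (hβ : β ∈ extSub (hyp x)) :
    intProd x (wedgeVec x β) = (‖x‖ ^ 2) • β := by
  have h := clifford' x x β
  rw [int_extSub_hyp hβ, map_zero, add_zero, real_inner_self_eq_norm_sq] at h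
  exact h

lemma PiOp_eq (x : V n) (hx : x ≠ 0) (γ : Ext n) :
    PiOp x γ = (‖x‖ ^ 2)⁻¹ • intProd x (wedgeVec x γ) := by
  have hn2 : (‖x‖ ^ 2 : ℝ) ≠ 0 := pow_ne_zero 2 (norm_ne_zero_iff.mpr hx)
  obtain ⟨a, ha, b, hb, rfl⟩ := Submodule.mem_sup.mp (mem_sup_decomp x hx γ)
  obtain ⟨β, hβ, rfl⟩ := Submodule.mem_map.mp hb
  have h1 : intProd x (wedgeVec x (a + wedgeVec x β)) = (‖x‖ ^ 2) • a := by
    rw [map_add, map_add, wedge_wedge_self, map_zero, add_zero, int_wedge_self_extSub ha]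
  rw [h1, smul_smul, inv_mul_cancel₀ hn2, one_smul]
  show (extSub (hyp x)).starProjection (a + wedgeVec x β) = a
  apply Submodule.eq_starProjection_of_mem_of_inner_eq_zero ha
  intro w hw
  rw [add_sub_cancel_left]
  rw [real_inner_comm, ← int_inner, int_extSub_hyp hw, inner_zero_left]

lemma PhiOp_eq (x : V n) (hx : x ≠ 0) (γ : Ext n) :
    PhiOp x γ = (‖x‖ ^ 2)⁻¹ • wedgeVec x (intProd x γ) := by
  have hn2 : (‖x‖ ^ 2 : ℝ) ≠ 0 := pow_ne_zero 2 (norm_ne_zero_iff.mpr hx)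
  obtain ⟨a, ha, b, hb, rfl⟩ := Submodule.mem_sup.mp (mem_sup_decomp x hx γ)
  obtain ⟨β, hβ, rfl⟩ := Submodule.mem_map.mp hb
  have h1 : wedgeVec x (intProd x (a + wedgeVec x β)) = (‖x‖ ^ 2) • (wedgeVec x β) := by
    rw [map_add, int_extSub_hyp ha, zero_add, int_wedge_self_extSub hβ, LinearMap.map_smul]
  rw [h1, smul_smul, inv_mul_cancel₀ hn2, one_smul]
  show ((extSub (hyp x)).map (wedgeVec x)).starProjection (a + wedgeVec x β)
      = wedgeVec x β
  apply Submodule.eq_starProjection_of_mem_of_inner_eq_zero (Submodule.mem_map_of_mem hβ)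
  intro w hw
  obtain ⟨δ, hδ, rfl⟩ := Submodule.mem_map.mp hw
  rw [add_sub_cancel_right]
  rw [← int_inner, int_extSub_hyp ha, inner_zero_left]

lemma PiPhi (x : V n) (hx : x ≠ 0) (γ : Ext n) : PhiOp x γ = γ - PiOp x γ := by
  have hn2 : (‖x‖ ^ 2 : ℝ) ≠ 0 := pow_ne_zero 2 (norm_ne_zero_iff.mpr hx)
  rw [PiOp_eq x hx, PhiOp_eq x hx, eq_sub_iff_add_eq, ← smul_add, add_comm,
    clifford' x x γ, real_inner_self_eq_norm_sq, smul_smul, inv_mul_cancel₀ hn2, one_smul]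

end Xray

namespace Xray

variable {n : ℕ}

lemma wedge_single_basis_mem {i : Fin n} {s : Finset (Fin n)} (h : i ∈ s) :
    wedgeVec (EuclideanSpace.single i (1:ℝ)) (EuclideanSpace.single s (1:ℝ)) = 0 := by
  ext u
  rw [wedge_apply]
  apply Finset.sum_eq_zero
  intro k hk
  by_cases hki : k = i
  · subst hki
    have hz : (EuclideanSpace.single s (1:ℝ)) (u.erase k) = 0 := by
      rw [EuclideanSpace.single_apply,
        if_neg (fun hequ => Finset.notMem_erase k u (by rw [hequ]; exact h))]
    rw [hz, mul_zero]
  · rw [show (EuclideanSpace.single i (1:ℝ)) k = 0 by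
      rw [EuclideanSpace.single_apply, if_neg hki]]
    ring

lemma int_single_basis_not_mem {i : Fin n} {s : Finset (Fin n)} (h : i ∉ s) :
    intProd (EuclideanSpace.single i (1:ℝ)) (EuclideanSpace.single s (1:ℝ)) = 0 := by
  ext u
  rw [int_apply]
  apply Finset.sum_eq_zero
  intro k hk
  by_cases hki : k = i
  · subst hki
    have hz : (EuclideanSpace.single s (1:ℝ)) (insert k u) = 0 := by
      rw [EuclideanSpace.single_apply,
        if_neg (fun hequ => h (by rw [← hequ]; exact Finset.mem_insert_self k u))]
    rw [hz, mul_zero]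
  · rw [show (EuclideanSpace.single i (1:ℝ)) k = 0 by
      rw [EuclideanSpace.single_apply, if_neg hki]]
    ring

lemma inner_basis_self (i : Fin n) :
    ⟪(EuclideanSpace.single i (1:ℝ) : V n), EuclideanSpace.single i (1:ℝ)⟫ = 1 := by
  rw [inner_V]
  rw [Finset.sum_eq_single i] <;> simp [EuclideanSpace.single_apply]

lemma sum_int_wedge_grade {p : ℕ} {α : Ext n} (hα : α ∈ grade n p) :
    ∑ i : Fin n, intProd (EuclideanSpace.single i (1:ℝ))
      (wedgeVec (EuclideanSpace.single i (1:ℝ)) α) = ((n:ℝ) - p) • α := by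
  induction hα using Submodule.span_induction with
  | mem β hβ =>
    obtain ⟨s, hcard, rfl⟩ := hβ
    have hterm : ∀ i : Fin n, intProd (EuclideanSpace.single i (1:ℝ))
        (wedgeVec (EuclideanSpace.single i (1:ℝ)) (EuclideanSpace.single s (1:ℝ)))
        = if i ∈ s then 0 else EuclideanSpace.single s (1:ℝ) := by
      intro i
      by_cases h : i ∈ s
      · rw [if_pos h, wedge_single_basis_mem h, map_zero]
      · rw [if_neg h]
        have hc := clifford' (EuclideanSpace.single i (1:ℝ)) (EuclideanSpace.single i (1:ℝ))
          (EuclideanSpace.single s (1:ℝ))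
        rw [int_single_basis_not_mem h, map_zero, add_zero, inner_basis_self, one_smul] at hc
        exact hc
    rw [Finset.sum_congr rfl (fun i _ => hterm i)]
    have hswap : ∀ i : Fin n, (if i ∈ s then (0:Ext n) else EuclideanSpace.single s 1)
        = (if i ∈ sᶜ then EuclideanSpace.single s (1:ℝ) else 0) := by
      intro i
      by_cases h : i ∈ s <;> simp [h]
    rw [Finset.sum_congr rfl (fun i _ => hswap i), Finset.sum_ite_mem, Finset.univ_inter,
      Finset.sum_const, ← Nat.cast_smul_eq_nsmul ℝ, Finset.card_compl, Fintype.card_fin,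
      hcard, Nat.cast_sub (hcard ▸ (by simpa using s.card_le_univ))]
  | zero => simp
  | add β γ _ _ hβ hγ => simp only [map_add, Finset.sum_add_distrib, hβ, hγ, smul_add]
  | smul c β _ hβ =>
    simp only [LinearMap.map_smul, ← Finset.smul_sum, hβ]
    rw [smul_comm]

end Xray

namespace Xray

def NOp (n : ℕ) : Ext n →ₗ[ℝ] Ext n :=
  (n:ℝ)⁻¹ • ∑ i : Fin n,
    (intProd (EuclideanSpace.single i 1)) ∘ₗ (wedgeVec (EuclideanSpace.single i 1))

def TOp (n : ℕ) : V n →ₗ[ℝ] V n →ₗ[ℝ] (Ext n →ₗ[ℝ] Ext n) :=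
  LinearMap.mk₂ ℝ
    (fun x y => (2:ℝ)⁻¹ • (intProd x ∘ₗ wedgeVec y + intProd y ∘ₗ wedgeVec x) - ⟪x, y⟫ • NOp n)
    (by intro x x' y
        rw [int_add, wedge_add, LinearMap.add_comp, LinearMap.comp_add, inner_add_left, add_smul]
        module)
    (by intro c x y
        rw [int_smul, wedge_smul, LinearMap.smul_comp, LinearMap.comp_smul, real_inner_smul_left,
          mul_smul]
        module)
    (by intro x y y'
        rw [int_add, wedge_add, LinearMap.add_comp, LinearMap.comp_add, inner_add_right, add_smul]
        module)
    (by intro c x y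
        rw [int_smul, wedge_smul, LinearMap.smul_comp, LinearMap.comp_smul, real_inner_smul_right,
          mul_smul]
        module)

lemma TOp_apply {n : ℕ} (x y : V n) :
    TOp n x y = (2:ℝ)⁻¹ • (intProd x ∘ₗ wedgeVec y + intProd y ∘ₗ wedgeVec x) - ⟪x, y⟫ • NOp n :=
  rfl

lemma TOp_trace (n : ℕ) :
    ∑ i : Fin n, TOp n (EuclideanSpace.single i 1) (EuclideanSpace.single i 1) = 0 := by
  have hterm : ∀ i : Fin n, TOp n (EuclideanSpace.single i 1) (EuclideanSpace.single i 1)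
      = (intProd (EuclideanSpace.single i 1)) ∘ₗ (wedgeVec (EuclideanSpace.single i 1))
        - NOp n := by
    intro i
    rw [TOp_apply, inner_basis_self, one_smul]
    congr 1
    rw [← two_smul ℝ, smul_smul]
    norm_num
  rw [Finset.sum_congr rfl (fun i _ => hterm i), Finset.sum_sub_distrib,
    Finset.sum_const, Finset.card_univ, Fintype.card_fin]
  by_cases hn : n = 0
  · subst hn
    have h0 : (∑ i : Fin 0,
        (intProd (EuclideanSpace.single i 1)) ∘ₗ (wedgeVec (EuclideanSpace.single i (1:ℝ)))) = 0 :=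
      Finset.sum_of_isEmpty _
    rw [h0]
    unfold NOp
    rw [h0]
    simp
  · unfold NOp
    rw [← Nat.cast_smul_eq_nsmul ℝ, smul_smul, mul_inv_cancel₀ (Nat.cast_ne_zero.mpr hn),
      one_smul, sub_self]

lemma NOp_grade {n p : ℕ} {α : Ext n} (hα : α ∈ grade n p) :
    NOp n α = ((((n:ℝ) - p)) * (n:ℝ)⁻¹) • α := by
  unfold NOp
  rw [LinearMap.smul_apply, LinearMap.sum_apply]
  simp only [LinearMap.comp_apply]
  rw [sum_int_wedge_grade hα, smul_smul, mul_comm]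

end Xray


open Xray in
/-- for `0 ≤ p ≤ n` there is an operator field `H(x) = T x x` on `Λᵖℝⁿ`,
homogeneously quadratic in `x` (entries `x ↦ ⟪T x x α, β⟫` are homogeneous quadratic
polynomials) and harmonic (equivalently `∑ i, T eᵢ eᵢ = 0`), such that for all `x ≠ 0`,
on `Λᵖℝⁿ`: `Π_x = ((n-p)/n)·I + |x|⁻² H(x)` and `Φ_x = (p/n)·I − |x|⁻² H(x)`. -/
theorem stmt14 (n p : ℕ) (hp : p ≤ n) :
    ∃ T : V n →ₗ[ℝ] V n →ₗ[ℝ] (Ext n →ₗ[ℝ] Ext n),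
      (∑ i : Fin n, T (EuclideanSpace.single i 1) (EuclideanSpace.single i 1) = 0) ∧
      ∀ x : V n, x ≠ 0 → ∀ α ∈ grade n p,
        PiOp x α = (((n : ℝ) - p) / n) • α + (‖x‖ ^ 2)⁻¹ • (T x x) α ∧
        PhiOp x α = ((p : ℝ) / n) • α - (‖x‖ ^ 2)⁻¹ • (T x x) α := by
  refine ⟨TOp n, TOp_trace n, ?_⟩
  intro x hx α hα
  have hn0 : (n:ℝ) ≠ 0 := by
    intro h
    apply hx
    have hn : n = 0 := by exact_mod_cast h
    subst hn
    ext i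
    exact i.elim0
  have hx2 : (‖x‖ ^ 2 : ℝ) ≠ 0 := pow_ne_zero 2 (norm_ne_zero_iff.mpr hx)
  have hT : TOp n x x α = intProd x (wedgeVec x α)
      - (‖x‖ ^ 2 * ((n:ℝ) - p) * (n:ℝ)⁻¹) • α := by
    rw [TOp_apply, LinearMap.sub_apply, LinearMap.smul_apply, LinearMap.add_apply,
      LinearMap.smul_apply,
      NOp_grade hα, real_inner_self_eq_norm_sq, smul_smul, ← mul_assoc]
    simp only [LinearMap.comp_apply]
    rw [← two_smul ℝ (intProd x (wedgeVec x α)), smul_smul]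
    norm_num
  have hPi : PiOp x α = (((n : ℝ) - p) / n) • α + (‖x‖ ^ 2)⁻¹ • (TOp n x x) α := by
    rw [PiOp_eq x hx, hT, smul_sub, smul_smul]
    rw [show (‖x‖ ^ 2)⁻¹ * (‖x‖ ^ 2 * ((n:ℝ) - p) * (n:ℝ)⁻¹) = ((n:ℝ) - p) / n by
      field_simp]
    abel
  refine ⟨hPi, ?_⟩
  rw [PiPhi x hx, hPi]
  have hsum : (((n : ℝ) - p) / n) + ((p:ℝ) / n) = 1 := by
    field_simp
    ring
  calc α - ((((n : ℝ) - p) / n) • α + (‖x‖ ^ 2)⁻¹ • (TOp n x x) α)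
      = (1:ℝ) • α - (((n : ℝ) - p) / n) • α - (‖x‖ ^ 2)⁻¹ • (TOp n x x) α := by
        rw [one_smul]; abel
    _ = ((((n : ℝ) - p) / n) + ((p:ℝ) / n)) • α - (((n : ℝ) - p) / n) • α
          - (‖x‖ ^ 2)⁻¹ • (TOp n x x) α := by rw [hsum]
    _ = ((p : ℝ) / n) • α - (‖x‖ ^ 2)⁻¹ • (TOp n x x) α := by rw [add_smul]; abel
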